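/- Let w be an infinite binary word with injective gap function g. Then the first difference of the subword complexity satisfies 1 ≤ f_w(n+1) - f_w(n) ≤ n + 1 for all n ≥ 1. -/

import Mathlib

/-- `u` occurs in `w` starting at position `i` (positions are 1-indexed). -/
def FactorAt (w : ℕ → Fin 2) (i : ℕ) (u : List (Fin 2)) : Prop :=
  u = (List.range u.length).map (fun k => w (i + k))

/-- `u` is a subword (factor) of the infinite word `w`. -/
def IsFactor (w : ℕ → Fin 2) (u : List (Fin 2)) : Prop :=
  ∃ i, 1 ≤ i ∧ FactorAt w i u

/-- The subword complexity function of `w`. -/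
noncomputable def complexity (w : ℕ → Fin 2) (n : ℕ) : ℕ :=
  Set.ncard {u : List (Fin 2) | u.length = n ∧ IsFactor w u}

/-- `G` is the 1-distribution function of `w`: `G 0 = 0` and `G i` is the
position of the `i`-th `1` of `w` (positions 1-indexed). -/
def OneDistrib (w : ℕ → Fin 2) (G : ℕ → ℕ) : Prop :=
  G 0 = 0 ∧ StrictMono G ∧ ∀ p, 1 ≤ p → (w p = 1 ↔ ∃ i, 1 ≤ i ∧ G i = p)

/-- The gap function associated with a 1-distribution function `G`. -/
def gap (G : ℕ → ℕ) (i : ℕ) : ℕ := G i - G (i - 1)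

/-- The gap function is strictly increasing. -/
def GapIncreasing (G : ℕ → ℕ) : Prop :=
  ∀ i, 1 ≤ i → gap G i < gap G (i + 1)

/-- `u` is a right special factor of `w`. -/
def RightSpecial (w : ℕ → Fin 2) (u : List (Fin 2)) : Prop :=
  IsFactor w (u ++ [0]) ∧ IsFactor w (u ++ [1])

/-! ### Auxiliary lemmas -/

lemma factorAt_get {w : ℕ → Fin 2} {i : ℕ} {u : List (Fin 2)} (h : FactorAt w i u)
    {k : ℕ} (hk : k < u.length) : u[k] = w (i + k) := by
  rw [List.getElem_of_eq h hk]
  simp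

lemma factorAt_append_iff {w : ℕ → Fin 2} {i : ℕ} {u : List (Fin 2)} {b : Fin 2} :
    FactorAt w i (u ++ [b]) ↔ FactorAt w i u ∧ w (i + u.length) = b := by
  unfold FactorAt
  rw [List.length_append, List.length_singleton, List.range_succ, List.map_append]
  constructor
  · intro h
    obtain ⟨h1, h2⟩ := List.append_inj' h (by simp)
    simp at h2
    exact ⟨h1, h2.symm⟩
  · rintro ⟨h1, h2⟩
    simp [← h1, h2]

lemma factorAt_replicate {w : ℕ → Fin 2} {i m : ℕ} (h : ∀ k, k < m → w (i + k) = 0) :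
    FactorAt w i (List.replicate m (0 : Fin 2)) := by
  unfold FactorAt
  rw [List.length_replicate]
  symm
  apply List.eq_replicate_iff.mpr
  refine ⟨by simp, ?_⟩
  intro b hb
  simp only [List.mem_map, List.mem_range] at hb
  obtain ⟨k, hk, hkb⟩ := hb
  rw [← hkb]
  exact h k hk

lemma fin2_cases (x : Fin 2) : x = 0 ∨ x = 1 := by fin_cases x <;> simp

lemma exists_adjacent : ∀ (d : ℕ) (x : ℕ → Fin 2) (p q : ℕ), q - p ≤ d → p < q → x p = 1 → x q = 1 →
    ∃ a b, p ≤ a ∧ a < b ∧ b ≤ q ∧ x a = 1 ∧ x b = 1 ∧ ∀ r, a < r → r < b → x r = 0 := by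
  intro d
  induction d with
  | zero => intro x p q h hpq _ _; omega
  | succ d ih =>
    intro x p q hle hpq h1 h2
    by_cases hz : ∀ r, p < r → r < q → x r = 0
    · exact ⟨p, q, le_refl _, hpq, le_refl _, h1, h2, hz⟩
    · push_neg at hz
      obtain ⟨r, hr1, hr2, hr3⟩ := hz
      have hx : x r = 1 := (fin2_cases (x r)).resolve_left hr3
      obtain ⟨a, b, ha1, hab, hb1, hxa, hxb, hzz⟩ := ih x p r (by omega) hr1 h1 hx
      exact ⟨a, b, ha1, hab, by omega, hxa, hxb, hzz⟩

section
variable {w : ℕ → Fin 2} {G : ℕ → ℕ} (hG : OneDistrib w G)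
include hG

lemma G_le_apply (i : ℕ) : i ≤ G i := hG.2.1.le_apply

lemma w_G_eq_one {j : ℕ} (hj : 1 ≤ j) : w (G j) = 1 :=
  (hG.2.2 (G j) (le_trans hj (G_le_apply hG j))).mpr ⟨j, hj, rfl⟩

lemma between_zero {j p : ℕ} (h1 : G j < p) (h2 : p < G (j + 1)) : w p = 0 := by
  rcases fin2_cases (w p) with h | h
  · exact h
  · exfalso
    obtain ⟨k, hk1, hk2⟩ := (hG.2.2 p (by omega)).mp h
    have hkj : j < k := by
      by_contra hc
      exact absurd (hk2 ▸ hG.2.1.le_iff_le.mpr (not_lt.mp hc)) (by omega)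
    have hkj2 : k < j + 1 := by
      by_contra hc
      exact absurd (hk2 ▸ hG.2.1.le_iff_le.mpr (not_lt.mp hc)) (by omega)
    omega

lemma consecutive_ones {a b : ℕ} (ha1 : 1 ≤ a) (hwa : w a = 1) (hwb : w b = 1)
    (hab : a < b) (hz : ∀ p, a < p → p < b → w p = 0) :
    ∃ j, G j = a ∧ G (j + 1) = b := by
  obtain ⟨j, hj1, hj2⟩ := (hG.2.2 a ha1).mp hwa
  obtain ⟨k, hk1, hk2⟩ := (hG.2.2 b (by omega)).mp hwb
  have hjk : j < k := hG.2.1.lt_iff_lt.mp (by omega)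
  rcases eq_or_lt_of_le (Nat.succ_le_of_lt hjk) with h | h
  · exact ⟨j, hj2, by rw [show j + 1 = k from h]; exact hk2⟩
  · exfalso
    have h1 : G j < G (j+1) := hG.2.1 (by omega)
    have h2 : G (j+1) < G k := hG.2.1 h
    have := hz (G (j+1)) (by omega) (by omega)
    rw [w_G_eq_one hG (by omega)] at this
    exact absurd this (by decide)

lemma gap_pos {i : ℕ} (hi : 1 ≤ i) : 1 ≤ gap G i := by
  have := hG.2.1 (show i - 1 < i by omega)
  unfold gap; omega

lemma gap_unbounded (hinj : ∀ i j, 1 ≤ i → 1 ≤ j → gap G i = gap G j → i = j) (m : ℕ) :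
    ∃ i, 1 ≤ i ∧ m ≤ gap G i := by
  by_contra hc
  push_neg at hc
  have hmaps : ∀ i ∈ Finset.Icc 1 m, gap G i ∈ Finset.Icc 1 (m - 1) := by
    intro i hi
    simp only [Finset.mem_Icc] at hi ⊢
    have := gap_pos hG hi.1
    have := hc i hi.1
    omega
  have hinj' : Set.InjOn (gap G) (Finset.Icc 1 m) := by
    intro a ha b hb hab
    simp only [Finset.coe_Icc, Set.mem_Icc] at ha hb
    exact hinj a b ha.1 hb.1 hab
  have := Finset.card_le_card_of_injOn (gap G) hmaps hinj'
  simp [Nat.card_Icc] at this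
  have h1 : 1 ≤ m := by
    by_contra h
    exact absurd (hc 1 le_rfl) (by omega)
  omega

lemma occ_unique (hinj : ∀ i j, 1 ≤ i → 1 ≤ j → gap G i = gap G j → i = j)
    {v : List (Fin 2)} {i i' : ℕ} (hi : 1 ≤ i) (hi' : 1 ≤ i')
    (h : FactorAt w i v) (h' : FactorAt w i' v)
    {p q : ℕ} (hq : q < v.length) (hpq : p < q)
    (h1 : v[p]'(lt_trans hpq hq) = 1) (h2 : v[q]'hq = 1) : i = i' := by
  set x : ℕ → Fin 2 := fun k => if hk : k < v.length then v[k] else 0 with hx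
  obtain ⟨a, b, hpa, hab, hbq, hxa, hxb, hzz⟩ :=
    exists_adjacent q x p q (by omega) hpq (by simp [hx, lt_trans hpq hq, h1])
      (by simp [hx, hq, h2])
  have hb : b < v.length := lt_of_le_of_lt hbq hq
  have ha : a < v.length := lt_trans hab hb
  have hva : v[a] = 1 := by simpa [hx, ha] using hxa
  have hvb : v[b] = 1 := by simpa [hx, hb] using hxb
  have key : ∀ m, 1 ≤ m → FactorAt w m v → ∃ j, G j = m + a ∧ G (j + 1) = m + b := by
    intro m hm hf
    apply consecutive_ones hG (by omega)
    · rw [← factorAt_get hf ha]; exact hva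
    · rw [← factorAt_get hf hb]; exact hvb
    · omega
    · intro r hr1 hr2
      have hs : r - m < v.length := by omega
      have := factorAt_get hf hs
      rw [show m + (r - m) = r by omega] at this
      rw [← this]
      have hz0 := hzz (r - m) (by omega) (by omega)
      simpa [hx, hs] using hz0
  obtain ⟨j, hj1, hj2⟩ := key i hi h
  obtain ⟨j', hj1', hj2'⟩ := key i' hi' h'
  have hg : gap G (j + 1) = gap G (j' + 1) := by
    unfold gap
    simp only [Nat.add_sub_cancel]
    omega
  have := hinj (j + 1) (j' + 1) (by omega) (by omega) hg
  have : j = j' := by omega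
  subst this
  omega

end

/-- `v` has at most one occurrence of `1`. -/
def AtMostOne (v : List (Fin 2)) : Prop :=
  ∀ p q (hp : p < v.length) (hq : q < v.length), v[p] = 1 → v[q] = 1 → p = q

lemma amo_eq {v v' : List (Fin 2)} (hl : v.length = v'.length)
    (h : AtMostOne v) (h' : AtMostOne v')
    (hidx : v.idxOf 1 = v'.idxOf 1) : v = v' := by
  apply List.ext_getElem hl
  intro k hk hk'
  have char : ∀ (u : List (Fin 2)), AtMostOne u → ∀ m (hm : m < u.length),
      (u[m] = 1 ↔ u.idxOf 1 = m) := by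
    intro u hu m hm
    constructor
    · intro h1
      have hmem : (1 : Fin 2) ∈ u := by rw [← h1]; exact List.getElem_mem _
      have hlt : u.idxOf 1 < u.length := List.idxOf_lt_length_iff.mpr hmem
      exact hu _ _ hlt hm (List.getElem_idxOf hlt) h1
    · intro h1
      subst h1
      exact List.getElem_idxOf hm
  rcases fin2_cases v[k] with hv | hv <;> rcases fin2_cases v'[k] with hv' | hv'
  · rw [hv, hv']
  · exfalso
    have := (char v' h' k hk').mp hv'
    have := (char v h k hk).mpr (by omega)
    rw [this] at hv; exact absurd hv (by decide)
  · exfalso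
    have := (char v h k hk).mp hv
    have := (char v' h' k hk').mpr (by omega)
    rw [this] at hv'; exact absurd hv' (by decide)
  · rw [hv, hv']

lemma amo_ncard {n : ℕ} {R : Set (List (Fin 2))}
    (hR : ∀ v ∈ R, v.length = n ∧ AtMostOne v) : R.ncard ≤ n + 1 := by
  have hle : R.ncard ≤ (Set.univ : Set (Fin (n + 1))).ncard := by
    refine Set.ncard_le_ncard_of_injOn
      (fun (v : List (Fin 2)) => (⟨min (v.idxOf 1) n, by omega⟩ : Fin (n + 1)))
      (fun v _ => Set.mem_univ _) ?_ Set.finite_univ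
    intro v hv v' hv' hvv
    simp only [Fin.mk.injEq] at hvv
    have h1 : v.idxOf 1 ≤ n := (hR v hv).1 ▸ List.idxOf_le_length
    have h2 : v'.idxOf 1 ≤ n := (hR v' hv').1 ▸ List.idxOf_le_length
    exact amo_eq ((hR v hv).1.trans (hR v' hv').1.symm) (hR v hv).2 (hR v' hv').2 (by omega)
  simpa [Set.ncard_univ] using hle

theorem stmt9 (w : ℕ → Fin 2) (G : ℕ → ℕ) (hG : OneDistrib w G)
    (hinj : ∀ i j, 1 ≤ i → 1 ≤ j → gap G i = gap G j → i = j)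
    (n : ℕ) (hn : 1 ≤ n) :
    complexity w n + 1 ≤ complexity w (n + 1) ∧
    complexity w (n + 1) ≤ complexity w n + (n + 1) := by
  classical
  set S : ℕ → Set (List (Fin 2)) := fun m => {u | u.length = m ∧ IsFactor w u} with hS
  have hfin : ∀ m, (S m).Finite := fun m =>
    (List.finite_length_eq (Fin 2) m).subset (fun u hu => hu.1)
  have hcomp : ∀ m, complexity w m = (S m).ncard := fun m => rfl
  set zeros : List (Fin 2) := List.replicate n (0 : Fin 2) with hzeros
  have hzlen : zeros.length = n := by simp [hzeros]
  -- the big gap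
  obtain ⟨i0, hi0, hgap⟩ := gap_unbounded hG hinj (n + 2)
  set j : ℕ := i0 - 1 with hj
  have hjj : j + 1 = i0 := by omega
  have hbig : G j + (n + 2) ≤ G (j + 1) := by
    unfold gap at hgap
    rw [← hjj] at hgap
    simp only [Nat.add_sub_cancel] at hgap
    omega
  -- 0^n ++ [0] is a factor
  have hz0 : IsFactor w (zeros ++ [0]) := by
    refine ⟨G j + 1, by omega, factorAt_append_iff.mpr ⟨factorAt_replicate ?_, ?_⟩⟩
    · intro k hk
      exact between_zero hG (j := j) (by omega) (by omega)
    · rw [hzlen]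
      exact between_zero hG (j := j) (by omega) (by omega)
  -- 0^n ++ [1] is a factor
  have hz1 : IsFactor w (zeros ++ [1]) := by
    refine ⟨G (j + 1) - n, by omega, factorAt_append_iff.mpr ⟨factorAt_replicate ?_, ?_⟩⟩
    · intro k hk
      exact between_zero hG (j := j) (by omega) (by omega)
    · rw [hzlen, show G (j + 1) - n + n = G (j + 1) by omega]
      exact w_G_eq_one hG (by omega)
  have hzS : zeros ∈ S n := by
    obtain ⟨i, hi, hf⟩ := hz0
    exact ⟨hzlen, i, hi, (factorAt_append_iff.mp hf).1⟩
  -- lower bound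
  have lower : complexity w n + 1 ≤ complexity w (n + 1) := by
    set φ : List (Fin 2) → List (Fin 2) :=
      fun u => if IsFactor w (u ++ [0]) then u ++ [0] else u ++ [1] with hφ
    have hform : ∀ u, (φ u = u ++ [0] ∧ IsFactor w (u ++ [0])) ∨
        (φ u = u ++ [1] ∧ ¬ IsFactor w (u ++ [0])) := by
      intro u
      by_cases h : IsFactor w (u ++ [0])
      · left; exact ⟨by simp [hφ, h], h⟩
      · right; exact ⟨by simp [hφ, h], h⟩
    have hφmem : ∀ u ∈ S n, φ u ∈ S (n + 1) := by
      rintro u ⟨hlen, i, hi, hf⟩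
      have hext : IsFactor w (u ++ [w (i + n)]) :=
        ⟨i, hi, factorAt_append_iff.mpr ⟨hf, by rw [hlen]⟩⟩
      rcases hform u with ⟨he, hfac⟩ | ⟨he, hfac⟩
      · exact ⟨by simp [he, hlen], he ▸ hfac⟩
      · refine ⟨by simp [he, hlen], he ▸ ?_⟩
        rcases fin2_cases (w (i + n)) with hb | hb
        · exact absurd (hb ▸ hext) hfac
        · exact hb ▸ hext
    have hφinj : Set.InjOn φ (S n) := by
      intro u hu u' hu' he
      have hlen : u.length = u'.length := hu.1.trans hu'.1.symm
      rcases hform u with ⟨h1, _⟩ | ⟨h1, _⟩ <;> rcases hform u' with ⟨h2, _⟩ | ⟨h2, _⟩ <;>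
        · rw [h1, h2] at he
          exact List.append_inj_left' he (by simp)
    have hφz : φ zeros = zeros ++ [0] := by simp [hφ, hz0]
    have hnotmem : zeros ++ [1] ∉ φ '' (S n) := by
      rintro ⟨u, hu, he⟩
      have hlen : u.length = zeros.length := by rw [hu.1, hzlen]
      rcases hform u with ⟨h1, hfac⟩ | ⟨h1, hfac⟩
      · rw [h1] at he
        obtain ⟨he1, he2⟩ := List.append_inj he hlen
        exact absurd (List.head_eq_of_cons_eq he2) (by decide)
      · rw [h1] at he
        obtain ⟨he1, he2⟩ := List.append_inj he hlen
        exact hfac (he1 ▸ hz0)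
    have hsub : insert (zeros ++ [1]) (φ '' (S n)) ⊆ S (n + 1) := by
      rintro u (rfl | ⟨v, hv, rfl⟩)
      · exact ⟨by simp [hzlen], hz1⟩
      · exact hφmem v hv
    calc complexity w n + 1 = (φ '' (S n)).ncard + 1 := by
          rw [hcomp, Set.ncard_image_of_injOn hφinj]
      _ = (insert (zeros ++ [1]) (φ '' (S n))).ncard := by
          rw [Set.ncard_insert_of_notMem hnotmem ((hfin n).image φ)]
      _ ≤ complexity w (n + 1) := by
          rw [hcomp]
          exact Set.ncard_le_ncard hsub (hfin (n + 1))
  -- upper bound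
  have upper : complexity w (n + 1) ≤ complexity w n + (n + 1) := by
    set R : Set (List (Fin 2)) :=
      {v | v.length = n ∧ IsFactor w (v ++ [0]) ∧ IsFactor w (v ++ [1])} with hR
    -- every right special factor has at most one 1
    have hAMO : ∀ v ∈ R, AtMostOne v := by
      rintro v ⟨hvlen, ⟨i0, hi0, hf0⟩, ⟨i1, hi1, hf1⟩⟩
      obtain ⟨hf0v, hw0⟩ := factorAt_append_iff.mp hf0
      obtain ⟨hf1v, hw1⟩ := factorAt_append_iff.mp hf1
      have hne : i0 ≠ i1 := by
        intro h
        rw [h, hw1] at hw0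
        exact absurd hw0 (by decide)
      intro p q hp hq h1 h2
      by_contra hc
      rcases lt_or_gt_of_ne hc with hlt | hlt
      · exact hne (occ_unique hG hinj hi0 hi1 hf0v hf1v hq hlt h1 h2)
      · exact hne (occ_unique hG hinj hi0 hi1 hf0v hf1v hp hlt h2 h1)
    have hRcard : R.ncard ≤ n + 1 :=
      amo_ncard (fun v hv => ⟨hv.1, hAMO v hv⟩)
    have hRfin : R.Finite := (List.finite_length_eq (Fin 2) n).subset (fun v hv => hv.1)
    set A : Set (List (Fin 2)) :=
      {u ∈ S (n + 1) | ¬ (u.getLast? = some 1 ∧ u.dropLast ∈ R)} with hA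
    set B : Set (List (Fin 2)) :=
      {u ∈ S (n + 1) | u.getLast? = some 1 ∧ u.dropLast ∈ R} with hB
    -- structure of elements of S (n+1)
    have hstruct : ∀ u ∈ S (n + 1), ∃ v b, u = v ++ [b] ∧ v.length = n ∧
        v ∈ S n ∧ IsFactor w (v ++ [b]) := by
      rintro u ⟨hlen, hufac⟩
      have hne : u ≠ [] := by
        intro h; rw [h] at hlen; simp at hlen
      refine ⟨u.dropLast, u.getLast hne, (List.dropLast_append_getLast hne).symm, ?_, ?_, ?_⟩
      · rw [List.length_dropLast, hlen]; rfl
      · obtain ⟨i, hi, hf⟩ := hufac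
        rw [← List.dropLast_append_getLast hne] at hf
        exact ⟨by rw [List.length_dropLast, hlen]; rfl,
          i, hi, (factorAt_append_iff.mp hf).1⟩
      · rw [List.dropLast_append_getLast hne]; exact hufac
    have hAcard : A.ncard ≤ (S n).ncard := by
      refine Set.ncard_le_ncard_of_injOn List.dropLast ?_ ?_ (hfin n)
      · rintro u hu
        obtain ⟨v, b, rfl, hvlen, hvS, _⟩ := hstruct u hu.1
        simpa using hvS
      · rintro u hu u' hu' he
        obtain ⟨v, b, rfl, hvlen, hvS, hufac⟩ := hstruct u hu.1
        obtain ⟨v', b', rfl, hvlen', hvS', hufac'⟩ := hstruct u' hu'.1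
        simp only [List.dropLast_concat] at he
        subst he
        rcases fin2_cases b with hb | hb <;> rcases fin2_cases b' with hb' | hb'
        · rw [hb, hb']
        · exfalso
          subst hb; subst hb'
          have hvR : v ∈ R := ⟨hvlen, hufac, hufac'⟩
          exact hu'.2 ⟨by simp, by simpa using hvR⟩
        · exfalso
          subst hb; subst hb'
          have hvR : v ∈ R := ⟨hvlen, hufac', hufac⟩
          exact hu.2 ⟨by simp, by simpa using hvR⟩
        · rw [hb, hb']
    have hBcard : B.ncard ≤ R.ncard := by
      refine Set.ncard_le_ncard_of_injOn List.dropLast ?_ ?_ hRfin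
      · rintro u hu
        exact hu.2.2
      · rintro u hu u' hu' he
        obtain ⟨v, b, rfl, hvlen, hvS, _⟩ := hstruct u hu.1
        obtain ⟨v', b', rfl, hvlen', hvS', _⟩ := hstruct u' hu'.1
        have hb : b = 1 := by
          have := hu.2.1
          simpa using this
        have hb' : b' = 1 := by
          have := hu'.2.1
          simpa using this
        simp only [List.dropLast_concat] at he
        rw [he, hb, hb']
    have hcover : S (n + 1) ⊆ A ∪ B := by
      intro u hu
      by_cases h : u.getLast? = some 1 ∧ u.dropLast ∈ R
      · exact Or.inr ⟨hu, h⟩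
      · exact Or.inl ⟨hu, h⟩
    calc complexity w (n + 1) ≤ (A ∪ B).ncard := by
          rw [hcomp]
          exact Set.ncard_le_ncard hcover
            (((hfin (n + 1)).subset (fun u hu => hu.1)).union
              ((hfin (n + 1)).subset (fun u hu => hu.1)))
      _ ≤ A.ncard + B.ncard := Set.ncard_union_le A B
      _ ≤ (S n).ncard + (n + 1) := Nat.add_le_add hAcard (le_trans hBcard hRcard)
      _ = complexity w n + (n + 1) := by rw [hcomp]
  exact ⟨lower, upper⟩
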